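/- Let T_α be the Bellman optimality operator of a finite discounted MDP and let γ := max over all pairs of state-action pairs ((x,a),(y,b)) with a ∈ A x and b ∈ A y of (1 − ∑_z min(p x a z, p y b z)). Then for all u, v : Fin m → ℝ, sp(T_α u − T_α v) ≤ α·γ·sp(u − v); in particular, for all n ≥ 1, sp(T_α^n v⁰ − T_α^{n−1} v⁰) ≤ (αγ)^{n−1}·sp(T_α v⁰ − v⁰). -/
import Mathlib

open Finset

/-- Span seminorm `sp(u) = max_x u(x) - min_x u(x)` on `Fin m → ℝ`. -/
noncomputable def sp {m : ℕ} [NeZero m] (u : Fin m → ℝ) : ℝ :=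
  (univ.sup' univ_nonempty u) - (univ.inf' univ_nonempty u)

lemma sp_nonneg {m : ℕ} [NeZero m] (u : Fin m → ℝ) : 0 ≤ sp u := by
  have x : Fin m := ⟨0, Nat.pos_of_ne_zero (NeZero.ne m)⟩
  have h1 := Finset.le_sup' u (Finset.mem_univ x)
  have h2 := Finset.inf'_le u (Finset.mem_univ x)
  unfold sp; linarith

lemma prob_diff {m : ℕ} [NeZero m] (q1 q2 w : Fin m → ℝ)
    (h1 : ∀ z, 0 ≤ q1 z) (h2 : ∀ z, 0 ≤ q2 z)
    (s1 : ∑ z, q1 z = 1) (s2 : ∑ z, q2 z = 1) :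
    ∑ z, q1 z * w z - ∑ z, q2 z * w z ≤ (1 - ∑ z, min (q1 z) (q2 z)) * sp w := by
  set M := univ.sup' univ_nonempty w with hM
  set mi := univ.inf' univ_nonempty w with hmi
  have hMz : ∀ z, w z ≤ M := fun z => Finset.le_sup' w (Finset.mem_univ z)
  have hmiz : ∀ z, mi ≤ w z := fun z => Finset.inf'_le w (Finset.mem_univ z)
  have e1 : ∑ z, (q1 z - min (q1 z) (q2 z)) * w z ≤ (∑ z, (q1 z - min (q1 z) (q2 z))) * M := by
    rw [Finset.sum_mul]
    exact Finset.sum_le_sum fun z _ =>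
      mul_le_mul_of_nonneg_left (hMz z) (by linarith [min_le_left (q1 z) (q2 z)])
  have e2 : (∑ z, (q2 z - min (q1 z) (q2 z))) * mi ≤ ∑ z, (q2 z - min (q1 z) (q2 z)) * w z := by
    rw [Finset.sum_mul]
    exact Finset.sum_le_sum fun z _ =>
      mul_le_mul_of_nonneg_left (hmiz z) (by linarith [min_le_right (q1 z) (q2 z)])
  have d1 : ∑ z, (q1 z - min (q1 z) (q2 z)) * w z
      = ∑ z, q1 z * w z - ∑ z, (min (q1 z) (q2 z)) * w z := by
    rw [← Finset.sum_sub_distrib]; congr 1; ext z; ring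
  have d2 : ∑ z, (q2 z - min (q1 z) (q2 z)) * w z
      = ∑ z, q2 z * w z - ∑ z, (min (q1 z) (q2 z)) * w z := by
    rw [← Finset.sum_sub_distrib]; congr 1; ext z; ring
  have t1 : ∑ z, (q1 z - min (q1 z) (q2 z)) = 1 - ∑ z, min (q1 z) (q2 z) := by
    rw [Finset.sum_sub_distrib, s1]
  have t2 : ∑ z, (q2 z - min (q1 z) (q2 z)) = 1 - ∑ z, min (q1 z) (q2 z) := by
    rw [Finset.sum_sub_distrib, s2]
  unfold sp
  rw [← hM, ← hmi]
  rw [d1, t1] at e1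
  rw [d2, t2] at e2
  nlinarith [e1, e2]

/-- Bellman optimality operator of a finite discounted MDP. -/
noncomputable def bellman {m K : ℕ} (A : Fin m → Finset (Fin K))
    (hA : ∀ x, (A x).Nonempty) (r : Fin m → Fin K → ℝ)
    (p : Fin m → Fin K → Fin m → ℝ) (α : ℝ) (v : Fin m → ℝ) : Fin m → ℝ :=
  fun x => (A x).sup' (hA x) (fun a => r x a + α * ∑ y, p x a y * v y)

lemma key {m K : ℕ} [NeZero m] (A : Fin m → Finset (Fin K))
    (hA : ∀ x, (A x).Nonempty) (r : Fin m → Fin K → ℝ)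
    (p : Fin m → Fin K → Fin m → ℝ) (α : ℝ)
    (hp0 : ∀ x a y, a ∈ A x → 0 ≤ p x a y)
    (hp1 : ∀ x a, a ∈ A x → ∑ y, p x a y = 1)
    (hα0 : 0 ≤ α)
    (γ : ℝ)
    (hγdef : IsGreatest {g : ℝ | ∃ x y a b, a ∈ A x ∧ b ∈ A y ∧
        g = 1 - ∑ z, min (p x a z) (p y b z)} γ)
    (u v : Fin m → ℝ) (x y : Fin m) :
    (bellman A hA r p α u x - bellman A hA r p α v x) -
      (bellman A hA r p α u y - bellman A hA r p α v y) ≤ α * γ * sp (u - v) := by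
  obtain ⟨a, ha, hax⟩ := Finset.exists_mem_eq_sup' (hA x) (fun a => r x a + α * ∑ z, p x a z * u z)
  obtain ⟨b, hb, hby⟩ := Finset.exists_mem_eq_sup' (hA y) (fun b => r y b + α * ∑ z, p y b z * v z)
  have h1 : bellman A hA r p α u x = r x a + α * ∑ z, p x a z * u z := hax
  have h2 : r x a + α * ∑ z, p x a z * v z ≤ bellman A hA r p α v x :=
    Finset.le_sup' (fun a => r x a + α * ∑ z, p x a z * v z) ha
  have h3 : bellman A hA r p α v y = r y b + α * ∑ z, p y b z * v z := hby
  have h4 : r y b + α * ∑ z, p y b z * u z ≤ bellman A hA r p α u y :=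
    Finset.le_sup' (fun b => r y b + α * ∑ z, p y b z * u z) hb
  have hw : ∀ z, (u - v) z = u z - v z := fun z => rfl
  have step1 : (bellman A hA r p α u x - bellman A hA r p α v x) -
      (bellman A hA r p α u y - bellman A hA r p α v y) ≤
      α * (∑ z, p x a z * (u - v) z - ∑ z, p y b z * (u - v) z) := by
    have e1 : ∑ z, p x a z * (u - v) z = ∑ z, p x a z * u z - ∑ z, p x a z * v z := by
      rw [← Finset.sum_sub_distrib]; congr 1; ext z; rw [hw]; ring
    have e2 : ∑ z, p y b z * (u - v) z = ∑ z, p y b z * u z - ∑ z, p y b z * v z := by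
      rw [← Finset.sum_sub_distrib]; congr 1; ext z; rw [hw]; ring
    rw [e1, e2]; nlinarith [h1, h2, h3, h4]
  have step2 : ∑ z, p x a z * (u - v) z - ∑ z, p y b z * (u - v) z ≤
      (1 - ∑ z, min (p x a z) (p y b z)) * sp (u - v) :=
    prob_diff _ _ _ (fun z => hp0 x a z ha) (fun z => hp0 y b z hb) (hp1 x a ha) (hp1 y b hb)
  have hγmem : (1 - ∑ z, min (p x a z) (p y b z)) ≤ γ :=
    hγdef.2 ⟨x, y, a, b, ha, hb, rfl⟩
  have hsp := sp_nonneg (u - v)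
  calc _ ≤ α * (∑ z, p x a z * (u - v) z - ∑ z, p y b z * (u - v) z) := step1
    _ ≤ α * ((1 - ∑ z, min (p x a z) (p y b z)) * sp (u - v)) :=
        mul_le_mul_of_nonneg_left step2 hα0
    _ ≤ α * (γ * sp (u - v)) := by
        apply mul_le_mul_of_nonneg_left (mul_le_mul_of_nonneg_right hγmem hsp) hα0
    _ = α * γ * sp (u - v) := by ring


theorem stmt2 {m K : ℕ} [NeZero m] (A : Fin m → Finset (Fin K))
    (hA : ∀ x, (A x).Nonempty) (r : Fin m → Fin K → ℝ)
    (p : Fin m → Fin K → Fin m → ℝ)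
    (hp0 : ∀ x a y, a ∈ A x → 0 ≤ p x a y)
    (hp1 : ∀ x a, a ∈ A x → ∑ y, p x a y = 1)
    (α : ℝ) (hα0 : 0 ≤ α) (hα1 : α < 1)
    (γ : ℝ)
    (hγdef : IsGreatest {g : ℝ | ∃ x y a b, a ∈ A x ∧ b ∈ A y ∧
        g = 1 - ∑ z, min (p x a z) (p y b z)} γ) :
    (∀ u v : Fin m → ℝ,
      sp (bellman A hA r p α u - bellman A hA r p α v) ≤ α * γ * sp (u - v)) ∧
    (∀ (v0 : Fin m → ℝ) (n : ℕ), 1 ≤ n →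
      sp ((bellman A hA r p α)^[n] v0 - (bellman A hA r p α)^[n - 1] v0) ≤
        (α * γ) ^ (n - 1) * sp (bellman A hA r p α v0 - v0)) := by
  have hγ0 : 0 ≤ γ := by
    have x0 : Fin m := ⟨0, Nat.pos_of_ne_zero (NeZero.ne m)⟩
    obtain ⟨a0, ha0⟩ := hA x0
    have : (0:ℝ) ∈ {g : ℝ | ∃ x y a b, a ∈ A x ∧ b ∈ A y ∧
        g = 1 - ∑ z, min (p x a z) (p y b z)} := by
      refine ⟨x0, x0, a0, a0, ha0, ha0, ?_⟩
      simp [hp1 x0 a0 ha0]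
    exact hγdef.2 this
  have main : ∀ u v : Fin m → ℝ,
      sp (bellman A hA r p α u - bellman A hA r p α v) ≤ α * γ * sp (u - v) := by
    intro u v
    obtain ⟨x, -, hx⟩ := Finset.exists_mem_eq_sup' (univ_nonempty (α := Fin m))
      (bellman A hA r p α u - bellman A hA r p α v)
    obtain ⟨y, -, hy⟩ := Finset.exists_mem_eq_inf' (univ_nonempty (α := Fin m))
      (bellman A hA r p α u - bellman A hA r p α v)
    have : sp (bellman A hA r p α u - bellman A hA r p α v) =
        (bellman A hA r p α u x - bellman A hA r p α v x) -
        (bellman A hA r p α u y - bellman A hA r p α v y) := by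
      unfold sp; rw [hx, hy]; rfl
    rw [this]
    exact key A hA r p α hp0 hp1 hα0 γ hγdef u v x y
  refine ⟨main, ?_⟩
  intro v0 n hn
  induction n, hn using Nat.le_induction with
  | base => simp
  | succ n hn ih =>
    have e1 : (bellman A hA r p α)^[n + 1] v0 =
        bellman A hA r p α ((bellman A hA r p α)^[n] v0) :=
      Function.iterate_succ_apply' _ _ _
    have e2 : (bellman A hA r p α)^[n + 1 - 1] v0 =
        bellman A hA r p α ((bellman A hA r p α)^[n - 1] v0) := by
      simp only [Nat.add_sub_cancel]
      conv_lhs => rw [show n = (n - 1) + 1 by omega]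
      exact Function.iterate_succ_apply' _ _ _
    rw [e1, e2]
    have h1 := main ((bellman A hA r p α)^[n] v0) ((bellman A hA r p α)^[n - 1] v0)
    have h2 : α * γ * sp ((bellman A hA r p α)^[n] v0 - (bellman A hA r p α)^[n - 1] v0) ≤
        α * γ * ((α * γ) ^ (n - 1) * sp (bellman A hA r p α v0 - v0)) :=
      mul_le_mul_of_nonneg_left ih (mul_nonneg hα0 hγ0)
    have e3 : α * γ * ((α * γ) ^ (n - 1) * sp (bellman A hA r p α v0 - v0)) =
        (α * γ) ^ (n + 1 - 1) * sp (bellman A hA r p α v0 - v0) := by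
      rw [show n + 1 - 1 = (n - 1) + 1 by omega, pow_succ]; ring
    linarith
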